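/- Let G be a group and let g ∈ G be an element of infinite order. Then the element 1 - g is not a zero divisor in the integral group ring ℤ[G]; that is, for all x ∈ ℤ[G], (1-g)·x = 0 implies x = 0, and x·(1-g) = 0 implies x = 0. -/

import Mathlib

open MonoidAlgebra

theorem one_sub_infinite_order_not_zero_divisor
    {G : Type*} [Group G] (g : G) (hg : ∀ n : ℕ, 0 < n → g ^ n ≠ 1) :
    ∀ x : MonoidAlgebra ℤ G,
      ((1 - MonoidAlgebra.of ℤ G g) * x = 0 → x = 0) ∧
      (x * (1 - MonoidAlgebra.of ℤ G g) = 0 → x = 0) := by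
  have hfin : ¬ IsOfFinOrder g := by
    rw [isOfFinOrder_iff_pow_eq_one]
    rintro ⟨n, hn, hpow⟩
    exact hg n hn hpow
  have hpow : Function.Injective fun n : ℕ => g ^ n :=
    injective_pow_iff_not_isOfFinOrder.mpr hfin
  intro x
  constructor
  · intro h
    have hxe : x = MonoidAlgebra.of ℤ G g * x :=
      sub_eq_zero.mp (by simpa [sub_mul] using h)
    have hx : ∀ a : G, x.coeff a = x.coeff (g⁻¹ * a) := by
      intro a
      conv_lhs => rw [hxe]
      rw [show (MonoidAlgebra.of ℤ G g : MonoidAlgebra ℤ G) =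
        MonoidAlgebra.single g 1 from rfl, MonoidAlgebra.single_mul_apply, one_mul]
    by_contra hxne
    obtain ⟨a, ha⟩ := Finsupp.ne_iff.mp (mt MonoidAlgebra.coeff_eq_zero.mp hxne)
    simp only [Finsupp.coe_zero, Pi.zero_apply] at ha
    have hmem : ∀ n : ℕ, g⁻¹ ^ n * a ∈ x.coeff.support := by
      intro n
      induction n with
      | zero => simpa using ha
      | succ k ih =>
          have heq : x.coeff (g⁻¹ ^ (k + 1) * a) = x.coeff (g⁻¹ ^ k * a) := by
            rw [pow_succ', mul_assoc, ← hx]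
          rw [Finsupp.mem_support_iff] at ih ⊢
          rw [heq]; exact ih
    have hinj : Function.Injective fun n : ℕ => g⁻¹ ^ n * a := by
      intro n m hnm
      have h1 : g⁻¹ ^ n = g⁻¹ ^ m := mul_right_cancel hnm
      have h2 : g ^ n = g ^ m := by
        rw [inv_pow, inv_pow] at h1
        exact inv_injective h1
      exact hpow h2
    exact Set.not_infinite.mpr x.coeff.support.finite_toSet
      (Set.infinite_of_injective_forall_mem hinj (fun n => hmem n))
  · intro h
    have hxe : x = x * MonoidAlgebra.of ℤ G g :=
      sub_eq_zero.mp (by simpa [mul_sub] using h)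
    have hx : ∀ a : G, x.coeff a = x.coeff (a * g⁻¹) := by
      intro a
      conv_lhs => rw [hxe]
      rw [show (MonoidAlgebra.of ℤ G g : MonoidAlgebra ℤ G) =
        MonoidAlgebra.single g 1 from rfl, MonoidAlgebra.mul_single_apply, mul_one]
    by_contra hxne
    obtain ⟨a, ha⟩ := Finsupp.ne_iff.mp (mt MonoidAlgebra.coeff_eq_zero.mp hxne)
    simp only [Finsupp.coe_zero, Pi.zero_apply] at ha
    have hmem : ∀ n : ℕ, a * g⁻¹ ^ n ∈ x.coeff.support := by
      intro n
      induction n with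
      | zero => simpa using ha
      | succ k ih =>
          have heq : x.coeff (a * g⁻¹ ^ (k + 1)) = x.coeff (a * g⁻¹ ^ k) := by
            rw [pow_succ, ← mul_assoc, ← hx]
          rw [Finsupp.mem_support_iff] at ih ⊢
          rw [heq]; exact ih
    have hinj : Function.Injective fun n : ℕ => a * g⁻¹ ^ n := by
      intro n m hnm
      have h1 : g⁻¹ ^ n = g⁻¹ ^ m := mul_left_cancel hnm
      have h2 : g ^ n = g ^ m := by
        rw [inv_pow, inv_pow] at h1
        exact inv_injective h1
      exact hpow h2
    exact Set.not_infinite.mpr x.coeff.support.finite_toSet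
      (Set.infinite_of_injective_forall_mem hinj (fun n => hmem n))
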